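/- arXiv:1212.1213 — 2 statements merged into one kernel-verified Lean document; each statement's English description precedes it below -/
import Mathlib

section
/- Every path of length 2n + 1 in the quiver Q_D lies in the two-sided ideal I_τ of the path algebra kQ_D; equivalently, the image in Λ_{D,τ} of every path of length 2n + 1 is zero. -/
open Quiver

/-- The type of arrows of a quiver, bundled with their endpoints. -/
abbrev QuiverArrow (V : Type) [Quiver.{0} V] : Type := Σ a b : V, a ⟶ b

/-- The defining relations of the path algebra of a quiver `V` over `k`, presented
as a quotient of the free algebra on the vertices (idempotents) and the arrows. -/
inductive PathAlgRel (k : Type) [CommRing k] (V : Type) [Quiver.{0} V] [Fintype V] [DecidableEq V] :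
    FreeAlgebra k (V ⊕ QuiverArrow V) → FreeAlgebra k (V ⊕ QuiverArrow V) → Prop
  | vertex (a b : V) :
      PathAlgRel k V (FreeAlgebra.ι k (Sum.inl a) * FreeAlgebra.ι k (Sum.inl b))
        (if a = b then FreeAlgebra.ι k (Sum.inl a) else 0)
  | unit : PathAlgRel k V (∑ a : V, FreeAlgebra.ι k (Sum.inl a)) 1
  | src (f : QuiverArrow V) (v : V) :
      PathAlgRel k V (FreeAlgebra.ι k (Sum.inr f) * FreeAlgebra.ι k (Sum.inl v))
        (if v = f.1 then FreeAlgebra.ι k (Sum.inr f) else 0)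
  | tgt (f : QuiverArrow V) (v : V) :
      PathAlgRel k V (FreeAlgebra.ι k (Sum.inl v) * FreeAlgebra.ι k (Sum.inr f))
        (if v = f.2.1 then FreeAlgebra.ι k (Sum.inr f) else 0)

/-- The path algebra `kQ` of a finite quiver. -/
abbrev PathAlg (k : Type) [CommRing k] (V : Type) [Quiver.{0} V] [Fintype V] [DecidableEq V] :
    Type := RingQuot (PathAlgRel k V)

variable (k : Type) [CommRing k] (V : Type) [Quiver.{0} V] [Fintype V] [DecidableEq V]

/-- The idempotent of the path algebra corresponding to a vertex (trivial path). -/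
def vertexElem (a : V) : PathAlg k V :=
  RingQuot.mkAlgHom k (PathAlgRel k V) (FreeAlgebra.ι k (Sum.inl a))

/-- The element of the path algebra corresponding to an arrow. -/
def arrowElem (f : QuiverArrow V) : PathAlg k V :=
  RingQuot.mkAlgHom k (PathAlgRel k V) (FreeAlgebra.ι k (Sum.inr f))

/-- The element of the path algebra corresponding to a path: the product of its arrows
(in composition order), with trivial paths mapping to the vertex idempotents. -/
def pathElem : ∀ {a b : V}, Quiver.Path a b → PathAlg k V
  | a, _, Quiver.Path.nil => vertexElem k V a
  | _, _, Quiver.Path.cons p f => arrowElem k V ⟨_, _, f⟩ * pathElem p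

/-- The two-sided ideal of the path algebra generated by the arrows. -/
def arrowIdeal : TwoSidedIdeal (PathAlg k V) :=
  TwoSidedIdeal.span (Set.range (arrowElem k V))

open Quiver

/-- The Gauss data of an oriented knot diagram with `n` crossings: traversing the knot,
one passes through `2 * n` crossing-points, indexed by `ZMod (2 * n)`; `c i` is the
crossing visited at position `i`, and `over e`, `under e` are the positions at which the
crossing `e` is visited over- resp. under-crossing. -/
structure GaussData (n : ℕ) where
  c : ZMod (2 * n) → Fin n
  over' : Fin n → ZMod (2 * n)
  under : Fin n → ZMod (2 * n)
  bij : Function.Bijective (Sum.elim over' under : Fin n ⊕ Fin n → ZMod (2 * n))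
  c_over : ∀ e, c (over' e) = e
  c_under : ∀ e, c (under e) = e

variable {n : ℕ}

/-- The vertices of the quiver `Q_D` of the diagram: the crossings `Fin n`
(wrapped in a structure so that the quiver structure can depend on `D`). -/
@[ext] structure DiagVertex (D : GaussData n) where
  val : Fin n
  deriving DecidableEq

instance (D : GaussData n) : Fintype (DiagVertex D) :=
  Fintype.ofEquiv (Fin n) ⟨DiagVertex.mk, DiagVertex.val, fun _ => rfl, fun _ => rfl⟩

/-- The quiver `Q_D` of the diagram: vertices are the crossings, arrows are the segments,
indexed by `ZMod (2 * n)`; the arrow `i` has source `c i` and target `c (i + 1)`. -/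
instance diagQuiver (D : GaussData n) : Quiver.{0} (DiagVertex D) :=
  ⟨fun a b => { i : ZMod (2 * n) // D.c i = a.val ∧ D.c (i + 1) = b.val }⟩

namespace GaussData

variable (D : GaussData n)

/-- The path following the segments `i, i + 1, …, i + ℓ - 1`. -/
def segPath (i : ZMod (2 * n)) : ∀ ℓ : ℕ, Quiver.Path (⟨D.c i⟩ : DiagVertex D) ⟨D.c (i + ℓ)⟩
  | 0 => Quiver.Path.nil.cast rfl (congrArg (fun z => (⟨D.c z⟩ : DiagVertex D)) (by push_cast; ring))
  | ℓ + 1 =>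
      (Quiver.Path.cons (segPath i ℓ)
        (⟨i + ℓ, rfl, rfl⟩ : (⟨D.c (i + ℓ)⟩ : DiagVertex D) ⟶ ⟨D.c (i + ℓ + 1)⟩)).cast rfl
        (congrArg (fun z => (⟨D.c z⟩ : DiagVertex D)) (by push_cast; ring))

/-- The length of the path `α_e` : the unique representative in `{1, …, 2n}` of
`under e - over e` in `ZMod (2 * n)`. -/
def len₁ (e : Fin n) : ℕ :=
  if (D.under e - D.over' e).val = 0 then 2 * n else (D.under e - D.over' e).val

/-- The length of the path `β_e` : the unique representative in `{1, …, 2n}` of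
`over e - under e` in `ZMod (2 * n)`. -/
def len₂ (e : Fin n) : ℕ :=
  if (D.over' e - D.under e).val = 0 then 2 * n else (D.over' e - D.under e).val

lemma coe_len₁ [NeZero n] (e : Fin n) :
    ((D.len₁ e : ℕ) : ZMod (2 * n)) = D.under e - D.over' e := by
  haveI : NeZero (2 * n) := ⟨by have := NeZero.ne n; omega⟩
  rw [len₁]
  split_ifs with h
  · rw [ZMod.natCast_self]
    exact ((ZMod.val_eq_zero _).mp h).symm
  · exact ZMod.natCast_rightInverse _

lemma coe_len₂ [NeZero n] (e : Fin n) :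
    ((D.len₂ e : ℕ) : ZMod (2 * n)) = D.over' e - D.under e := by
  haveI : NeZero (2 * n) := ⟨by have := NeZero.ne n; omega⟩
  rw [len₂]
  split_ifs with h
  · rw [ZMod.natCast_self]
    exact ((ZMod.val_eq_zero _).mp h).symm
  · exact ZMod.natCast_rightInverse _

/-- The path `α_e`, from the over-point of `e` to its under-point. -/
def alphaPath [NeZero n] (e : Fin n) : Quiver.Path (⟨e⟩ : DiagVertex D) ⟨e⟩ :=
  (D.segPath (D.over' e) (D.len₁ e)).cast
    (congrArg DiagVertex.mk (D.c_over e))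
    (congrArg (fun z => (⟨D.c z⟩ : DiagVertex D)) (by rw [D.coe_len₁]; ring) |>.trans
      (congrArg DiagVertex.mk (D.c_under e)))

/-- The path `β_e`, from the under-point of `e` to its over-point. -/
def betaPath [NeZero n] (e : Fin n) : Quiver.Path (⟨e⟩ : DiagVertex D) ⟨e⟩ :=
  (D.segPath (D.under e) (D.len₂ e)).cast
    (congrArg DiagVertex.mk (D.c_under e))
    (congrArg (fun z => (⟨D.c z⟩ : DiagVertex D)) (by rw [D.coe_len₂]; ring) |>.trans
      (congrArg DiagVertex.mk (D.c_over e)))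

/-- The positive (over-crossing) fundamental cycle `γ⁺_e = β_e α_e`
(first `α_e`, then `β_e`). -/
def gammaPlus [NeZero n] (e : Fin n) : Quiver.Path (⟨e⟩ : DiagVertex D) ⟨e⟩ :=
  (D.alphaPath e).comp (D.betaPath e)

/-- The negative (under-crossing) fundamental cycle `γ⁻_e = α_e β_e`
(first `β_e`, then `α_e`). -/
def gammaMinus [NeZero n] (e : Fin n) : Quiver.Path (⟨e⟩ : DiagVertex D) ⟨e⟩ :=
  (D.betaPath e).comp (D.alphaPath e)

end GaussData

variable {n : ℕ}

/-- The element of the path algebra `kQ_D` given by the arrow (segment) `i`. -/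
def arrowGen (k : Type) [CommRing k] (D : GaussData n) (i : ZMod (2 * n)) :
    PathAlg k (DiagVertex D) :=
  arrowElem k (DiagVertex D) ⟨⟨D.c i⟩, ⟨D.c (i + 1)⟩, ⟨i, rfl, rfl⟩⟩

/-- The two-sided ideal `I_τ` of `kQ_D`, generated by the Type I relations (composable
length-2 paths `b ∘ a` with `b ≠ a + 1`) and the Type II relations
`α_e β_e - τ(e) β_e α_e`. -/
def knotIdeal (k : Type) [CommRing k] [NeZero n] (D : GaussData n) (τ : Fin n → kˣ) :
    TwoSidedIdeal (PathAlg k (DiagVertex D)) :=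
  TwoSidedIdeal.span
    ({x | ∃ i j : ZMod (2 * n), D.c (i + 1) = D.c j ∧ j ≠ i + 1 ∧
        x = arrowGen k D j * arrowGen k D i} ∪
     {x | ∃ e : Fin n, x = pathElem k (DiagVertex D) (D.gammaMinus e) -
        (τ e : k) • pathElem k (DiagVertex D) (D.gammaPlus e)})

/-- The defining relations of the algebra `Λ_{D,τ}` of the diagram, as a quotient of the
path algebra `kQ_D`. -/
inductive KnotRel (k : Type) [CommRing k] [NeZero n] (D : GaussData n) (τ : Fin n → kˣ) :
    PathAlg k (DiagVertex D) → PathAlg k (DiagVertex D) → Prop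
  | typeI (i j : ZMod (2 * n)) (hcomp : D.c (i + 1) = D.c j) (hne : j ≠ i + 1) :
      KnotRel k D τ (arrowGen k D j * arrowGen k D i) 0
  | typeII (e : Fin n) :
      KnotRel k D τ (pathElem k (DiagVertex D) (D.gammaMinus e))
        ((τ e : k) • pathElem k (DiagVertex D) (D.gammaPlus e))

/-- The algebra `Λ_{D,τ} = kQ_D / I_τ` of the diagram `D` with respect to `τ`. -/
abbrev KnotAlg (k : Type) [CommRing k] [NeZero n] (D : GaussData n) (τ : Fin n → kˣ) : Type :=
  RingQuot (KnotRel k D τ)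

/-- The elements of `Λ_{D,τ}` claimed to form a basis: the trivial paths, the
segment-following paths of length `1 ≤ ℓ ≤ 2n - 1`, and the positive fundamental cycles. -/
def knotBasisFamily (k : Type) [CommRing k] [NeZero n] (D : GaussData n) (τ : Fin n → kˣ) :
    Fin n ⊕ (ZMod (2 * n) × Fin (2 * n - 1)) ⊕ Fin n → KnotAlg k D τ
  | .inl e => RingQuot.mkAlgHom k (KnotRel k D τ) (vertexElem k (DiagVertex D) ⟨e⟩)
  | .inr (.inl (i, j)) =>
      RingQuot.mkAlgHom k (KnotRel k D τ) (pathElem k (DiagVertex D) (D.segPath i (j.val + 1)))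
  | .inr (.inr e) =>
      RingQuot.mkAlgHom k (KnotRel k D τ) (pathElem k (DiagVertex D) (D.gammaPlus e))

/-- The defining relations of the monomial algebra `Ξ_D` of the diagram: the Type I
relations, together with all paths of length `2n + 1` (Type II'). -/
inductive MonRel (k : Type) [CommRing k] [NeZero n] (D : GaussData n) :
    PathAlg k (DiagVertex D) → PathAlg k (DiagVertex D) → Prop
  | typeI (i j : ZMod (2 * n)) (hcomp : D.c (i + 1) = D.c j) (hne : j ≠ i + 1) :
      MonRel k D (arrowGen k D j * arrowGen k D i) 0
  | typeII' (a b : DiagVertex D) (p : Quiver.Path a b) (hp : p.length = 2 * n + 1) :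
      MonRel k D (pathElem k (DiagVertex D) p) 0

/-- The monomial algebra `Ξ_D = kQ_D / J_D` of the diagram `D`. -/
abbrev MonAlg (k : Type) [CommRing k] [NeZero n] (D : GaussData n) : Type :=
  RingQuot (MonRel k D)

/-- The elements of `Ξ_D` claimed to form a basis: the trivial paths and the
segment-following paths of length `1 ≤ ℓ ≤ 2n`. -/
def monBasisFamily (k : Type) [CommRing k] [NeZero n] (D : GaussData n) :
    Fin n ⊕ (ZMod (2 * n) × Fin (2 * n)) → MonAlg k D
  | .inl e => RingQuot.mkAlgHom k (MonRel k D) (vertexElem k (DiagVertex D) ⟨e⟩)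
  | .inr (i, j) =>
      RingQuot.mkAlgHom k (MonRel k D) (pathElem k (DiagVertex D) (D.segPath i (j.val + 1)))

section Aux

variable {k : Type} [CommRing k] {V : Type} [Quiver.{0} V] [Fintype V] [DecidableEq V]

lemma pathElem_nil (a : V) :
    pathElem k V (Quiver.Path.nil : Quiver.Path a a) = vertexElem k V a := by
  simp [pathElem]

lemma pathElem_cons {a b c : V} (q : Quiver.Path a b) (f : b ⟶ c) :
    pathElem k V (q.cons f) = arrowElem k V ⟨b, c, f⟩ * pathElem k V q := by
  simp [pathElem]

lemma aux_vertex_mul {a b : V} (p : Quiver.Path a b) :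
    vertexElem k V b * pathElem k V p = pathElem k V p := by
  cases p with
  | nil =>
    have h := RingQuot.mkAlgHom_rel k (PathAlgRel.vertex (k := k) a a)
    simp only [map_mul, if_pos rfl] at h
    rw [pathElem_nil]
    simpa [vertexElem] using h
  | cons q f =>
    have h := RingQuot.mkAlgHom_rel k (PathAlgRel.tgt (k := k) ⟨_, _, f⟩ b)
    simp only [map_mul, if_pos rfl] at h
    have h2 : vertexElem k V b * arrowElem k V ⟨_, _, f⟩ = arrowElem k V ⟨_, _, f⟩ := by
      simpa [vertexElem, arrowElem] using h
    rw [pathElem_cons, ← mul_assoc, h2]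

lemma aux_pathElem_cast {a b a' b' : V} (ha : a = a') (hb : b = b') (p : Quiver.Path a b) :
    pathElem k V (p.cast ha hb) = pathElem k V p := by
  subst ha; subst hb; rfl

lemma aux_pathElem_comp {a b c : V} (p : Quiver.Path a b) (q : Quiver.Path b c) :
    pathElem k V (p.comp q) = pathElem k V q * pathElem k V p := by
  induction q with
  | nil => rw [Quiver.Path.comp_nil, pathElem_nil, aux_vertex_mul]
  | cons q f ih =>
    rw [Quiver.Path.comp_cons, pathElem_cons, ih, pathElem_cons, mul_assoc]

variable {n : ℕ}

/-- The element of the path algebra given by the segment path `i, i+1, …, i+ℓ-1`. -/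
def sPE (k : Type) [CommRing k] (D : GaussData n) (i : ZMod (2 * n)) :
    ℕ → PathAlg k (DiagVertex D)
  | 0 => vertexElem k (DiagVertex D) ⟨D.c i⟩
  | (ℓ + 1) => arrowGen k D (i + ℓ) * sPE k D i ℓ

lemma sPE_zero (k : Type) [CommRing k] (D : GaussData n) (i : ZMod (2 * n)) :
    sPE k D i 0 = vertexElem k (DiagVertex D) ⟨D.c i⟩ := by simp [sPE]

lemma sPE_succ (k : Type) [CommRing k] (D : GaussData n) (i : ZMod (2 * n)) (ℓ : ℕ) :
    sPE k D i (ℓ + 1) = arrowGen k D (i + ℓ) * sPE k D i ℓ := by simp [sPE]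

lemma aux_seg (k : Type) [CommRing k] (D : GaussData n) (i : ZMod (2 * n)) (ℓ : ℕ) :
    pathElem k (DiagVertex D) (D.segPath i ℓ) = sPE k D i ℓ := by
  induction ℓ with
  | zero =>
    rw [GaussData.segPath, aux_pathElem_cast, pathElem_nil, sPE_zero]
  | succ m ih =>
    rw [GaussData.segPath, aux_pathElem_cast, pathElem_cons, ih, sPE_succ]
    rfl

lemma aux_vmul (k : Type) [CommRing k] (D : GaussData n) (i : ZMod (2 * n)) (a : ℕ) :
    vertexElem k (DiagVertex D) ⟨D.c (i + a)⟩ * sPE k D i a = sPE k D i a := by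
  rw [← aux_seg]
  exact aux_vertex_mul _

lemma aux_split (k : Type) [CommRing k] (D : GaussData n) (i : ZMod (2 * n)) (a b : ℕ) :
    sPE k D i (a + b) = sPE k D (i + a) b * sPE k D i a := by
  induction b with
  | zero => rw [Nat.add_zero, sPE_zero, aux_vmul]
  | succ m ih =>
    rw [← Nat.add_assoc, sPE_succ, sPE_succ, ih, mul_assoc]
    congr 2
    push_cast; ring

end Aux

section Aux2

variable {n : ℕ}

lemma over_ne_under (D : GaussData n) (e : Fin n) : D.over' e ≠ D.under e := fun h => by
  have h2 : (Sum.elim D.over' D.under : Fin n ⊕ Fin n → ZMod (2 * n)) (Sum.inl e)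
      = Sum.elim D.over' D.under (Sum.inr e) := by simpa using h
  exact absurd (D.bij.injective h2) (by simp)

lemma len_sum [NeZero n] (D : GaussData n) (e : Fin n) :
    D.len₁ e + D.len₂ e = 2 * n := by
  haveI : NeZero (2 * n) := ⟨by have := NeZero.ne n; omega⟩
  have hne : D.under e - D.over' e ≠ 0 := sub_ne_zero.mpr (Ne.symm (over_ne_under D e))
  have hne' : D.over' e - D.under e ≠ 0 := sub_ne_zero.mpr (over_ne_under D e)
  have h1 : (D.under e - D.over' e).val ≠ 0 := by rwa [Ne, ZMod.val_eq_zero]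
  have h1' : (D.over' e - D.under e).val ≠ 0 := by rwa [Ne, ZMod.val_eq_zero]
  rw [GaussData.len₁, GaussData.len₂, if_neg h1, if_neg h1']
  have h2 : D.over' e - D.under e = -(D.under e - D.over' e) := by ring
  rw [h2, ZMod.neg_val, if_neg hne]
  have hlt : (D.under e - D.over' e).val < 2 * n := ZMod.val_lt _
  omega

lemma aux_gammaPlus (k : Type) [CommRing k] [NeZero n] (D : GaussData n) (e : Fin n) :
    pathElem k (DiagVertex D) (D.gammaPlus e) = sPE k D (D.over' e) (2 * n) := by
  have hsum : D.len₁ e + D.len₂ e = 2 * n := len_sum D e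
  have hco : D.over' e + ((D.len₁ e : ℕ) : ZMod (2 * n)) = D.under e := by
    rw [D.coe_len₁]; ring
  rw [GaussData.gammaPlus, aux_pathElem_comp, GaussData.alphaPath, GaussData.betaPath,
    aux_pathElem_cast, aux_pathElem_cast, aux_seg, aux_seg]
  calc sPE k D (D.under e) (D.len₂ e) * sPE k D (D.over' e) (D.len₁ e)
      = sPE k D (D.over' e + ((D.len₁ e : ℕ) : ZMod (2 * n))) (D.len₂ e)
          * sPE k D (D.over' e) (D.len₁ e) := by rw [hco]
    _ = sPE k D (D.over' e) (D.len₁ e + D.len₂ e) := (aux_split k D _ _ _).symm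
    _ = sPE k D (D.over' e) (2 * n) := congrArg _ hsum

lemma aux_gammaMinus (k : Type) [CommRing k] [NeZero n] (D : GaussData n) (e : Fin n) :
    pathElem k (DiagVertex D) (D.gammaMinus e) = sPE k D (D.under e) (2 * n) := by
  have hsum : D.len₂ e + D.len₁ e = 2 * n := by rw [Nat.add_comm]; exact len_sum D e
  have hcu : D.under e + ((D.len₂ e : ℕ) : ZMod (2 * n)) = D.over' e := by
    rw [D.coe_len₂]; ring
  rw [GaussData.gammaMinus, aux_pathElem_comp, GaussData.alphaPath, GaussData.betaPath,
    aux_pathElem_cast, aux_pathElem_cast, aux_seg, aux_seg]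
  calc sPE k D (D.over' e) (D.len₁ e) * sPE k D (D.under e) (D.len₂ e)
      = sPE k D (D.under e + ((D.len₂ e : ℕ) : ZMod (2 * n))) (D.len₁ e)
          * sPE k D (D.under e) (D.len₂ e) := by rw [hcu]
    _ = sPE k D (D.under e) (D.len₂ e + D.len₁ e) := (aux_split k D _ _ _).symm
    _ = sPE k D (D.under e) (2 * n) := congrArg _ hsum

lemma aux_peel (k : Type) [CommRing k] [NeZero n] (D : GaussData n) (j : ZMod (2 * n)) :
    sPE k D j (2 * n) = arrowGen k D (j - 1) * sPE k D j (2 * n - 1) := by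
  have hn := NeZero.ne n
  have h1 : 2 * n = (2 * n - 1) + 1 := by omega
  rw [congrArg (sPE k D j) h1, sPE_succ]
  have h'' : j + ((2 * n - 1 : ℕ) : ZMod (2 * n)) = j - 1 := by
    rw [Nat.cast_sub (by omega : 1 ≤ 2 * n), ZMod.natCast_self, Nat.cast_one]
    ring
  rw [h'']

lemma arrowElem_eq_arrowGen (k : Type) [CommRing k] (D : GaussData n) {u v : DiagVertex D}
    (i : ZMod (2 * n)) (h1 : D.c i = u.val) (h2 : D.c (i + 1) = v.val) :
    arrowElem k (DiagVertex D) ⟨u, v, (⟨i, h1, h2⟩ : u ⟶ v)⟩ = arrowGen k D i := by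
  obtain ⟨uv⟩ := u
  obtain ⟨vv⟩ := v
  dsimp at h1 h2
  subst h1
  subst h2
  rfl

lemma aux_classify (k : Type) [CommRing k] (D : GaussData n) {a b : DiagVertex D}
    (p : Quiver.Path a b) :
    pathElem k (DiagVertex D) p ∈ TwoSidedIdeal.span {x | ∃ i j : ZMod (2 * n),
        D.c (i + 1) = D.c j ∧ j ≠ i + 1 ∧ x = arrowGen k D j * arrowGen k D i} ∨
      ∃ i : ZMod (2 * n), b = (⟨D.c (i + (p.length : ℕ))⟩ : DiagVertex D) ∧
        pathElem k (DiagVertex D) p = sPE k D i p.length := by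
  induction p with
  | nil =>
    right
    refine ⟨D.over' a.val, ?_, ?_⟩
    · ext
      simp [D.c_over]
    · rw [pathElem_nil]
      have ha : a = (⟨D.c (D.over' a.val)⟩ : DiagVertex D) := by ext; simp [D.c_over]
      show vertexElem k (DiagVertex D) a = sPE k D (D.over' a.val) 0
      rw [sPE_zero, ← ha]
  | @cons mid c' q f ih =>
    obtain ⟨i, h1, h2⟩ := f
    rcases ih with hq | ⟨j, hb, hq⟩
    · left
      rw [pathElem_cons]
      exact TwoSidedIdeal.mul_mem_left _ _ _ hq
    · have hcc : D.c i = D.c (j + (q.length : ℕ)) := h1.trans (congrArg DiagVertex.val hb)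
      rw [pathElem_cons, arrowElem_eq_arrowGen k D i h1 h2, hq]
      cases hl : q.length with
      | zero =>
        rw [hl] at hcc
        right
        refine ⟨i, ?_, ?_⟩
        · have hcast : i + (((q.cons (⟨i, h1, h2⟩ : mid ⟶ c')).length : ℕ) : ZMod (2 * n))
              = i + 1 := by
            simp only [Quiver.Path.length_cons, hl]
            push_cast
            ring
          rw [hcast]
          exact DiagVertex.ext h2.symm
        · simp only [Quiver.Path.length_cons, hl]
          rw [sPE_succ, sPE_zero, sPE_zero]
          have e1 : i + ((0 : ℕ) : ZMod (2 * n)) = i := by push_cast; ring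
          rw [e1]
          have e2 : (⟨D.c j⟩ : DiagVertex D) = ⟨D.c i⟩ :=
            DiagVertex.ext (by simpa using hcc.symm)
          rw [e2]
      | succ m =>
        rw [hl] at hcc
        by_cases hij : i = j + ((m + 1 : ℕ) : ZMod (2 * n))
        · right
          refine ⟨j, ?_, ?_⟩
          · have hcast : j + (((q.cons (⟨i, h1, h2⟩ : mid ⟶ c')).length : ℕ) : ZMod (2 * n))
                = i + 1 := by
              simp only [Quiver.Path.length_cons, hl]
              rw [hij]
              push_cast
              ring
            rw [hcast]
            exact DiagVertex.ext h2.symm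
          · simp only [Quiver.Path.length_cons, hl]
            conv_rhs => rw [sPE_succ]
            rw [hij]
        · left
          rw [sPE_succ, ← mul_assoc]
          refine TwoSidedIdeal.mul_mem_right _ _ _ (TwoSidedIdeal.subset_span ?_)
          have e3 : j + ((m : ℕ) : ZMod (2 * n)) + 1 = j + ((m + 1 : ℕ) : ZMod (2 * n)) := by
            push_cast
            ring
          refine ⟨j + (m : ℕ), i, ?_, ?_, rfl⟩
          · rw [e3, ← hcc]
          · rw [e3]
            exact hij

lemma aux_smul_mem {k : Type} [CommRing k] {V : Type} [Quiver.{0} V] [Fintype V] [DecidableEq V]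
    (I : TwoSidedIdeal (PathAlg k V)) (c : k) {x : PathAlg k V} (hx : x ∈ I) : c • x ∈ I := by
  rw [Algebra.smul_def]
  exact I.mul_mem_left _ _ hx

end Aux2

theorem stmt3 (k : Type) [Field k] [NeZero n] (D : GaussData n) (τ : Fin n → kˣ)
    (a b : DiagVertex D) (p : Quiver.Path a b) (hp : p.length = 2 * n + 1) :
    pathElem k (DiagVertex D) p ∈ knotIdeal k D τ := by
  have hn := NeZero.ne n
  rcases aux_classify k D p with h | ⟨i, hb, hp'⟩
  · exact TwoSidedIdeal.span_mono Set.subset_union_left h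
  · rw [hp] at hp'
    rw [hp', sPE_succ]
    have h2n : i + ((2 * n : ℕ) : ZMod (2 * n)) = i := by rw [ZMod.natCast_self, add_zero]
    rw [h2n]
    have hg : ∀ e : Fin n, pathElem k (DiagVertex D) (D.gammaMinus e)
        - (τ e : k) • pathElem k (DiagVertex D) (D.gammaPlus e) ∈ knotIdeal k D τ :=
      fun e => TwoSidedIdeal.subset_span (Or.inr ⟨e, rfl⟩)
    have htypeI : ∀ (i' j' : ZMod (2 * n)), D.c (i' + 1) = D.c j' → j' ≠ i' + 1 →
        ∀ x, arrowGen k D j' * arrowGen k D i' * x ∈ knotIdeal k D τ :=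
      fun i' j' hc hne x => TwoSidedIdeal.mul_mem_right _ _ _
        (TwoSidedIdeal.subset_span (Or.inl ⟨i', j', hc, hne, rfl⟩))
    obtain ⟨s, hs⟩ := D.bij.surjective i
    cases s with
    | inl e =>
      simp only [Sum.elim_inl] at hs
      subst hs
      rw [← aux_gammaPlus]
      have hminus : arrowGen k D (D.over' e) * pathElem k (DiagVertex D) (D.gammaMinus e)
          ∈ knotIdeal k D τ := by
        rw [aux_gammaMinus, aux_peel, ← mul_assoc]
        refine htypeI (D.under e - 1) (D.over' e) ?_ ?_ _
        · rw [sub_add_cancel, D.c_under, D.c_over]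
        · rw [sub_add_cancel]
          exact over_ne_under D e
      have hτ : (τ e : k) • (arrowGen k D (D.over' e) * pathElem k (DiagVertex D) (D.gammaPlus e))
          ∈ knotIdeal k D τ := by
        have h3 := TwoSidedIdeal.sub_mem _ hminus
          (TwoSidedIdeal.mul_mem_left _ (arrowGen k D (D.over' e)) _ (hg e))
        rwa [mul_sub, mul_smul_comm, sub_sub_cancel] at h3
      have h4 := aux_smul_mem (knotIdeal k D τ) (((τ e)⁻¹ : kˣ) : k) hτ
      rwa [smul_smul, Units.inv_mul, one_smul] at h4
    | inr e =>
      simp only [Sum.elim_inr] at hs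
      subst hs
      rw [← aux_gammaMinus]
      have hplus : arrowGen k D (D.under e) * pathElem k (DiagVertex D) (D.gammaPlus e)
          ∈ knotIdeal k D τ := by
        rw [aux_gammaPlus, aux_peel, ← mul_assoc]
        refine htypeI (D.over' e - 1) (D.under e) ?_ ?_ _
        · rw [sub_add_cancel, D.c_over, D.c_under]
        · rw [sub_add_cancel]
          exact (over_ne_under D e).symm
      have hsplit : arrowGen k D (D.under e) * pathElem k (DiagVertex D) (D.gammaMinus e)
          = arrowGen k D (D.under e) * (pathElem k (DiagVertex D) (D.gammaMinus e)
              - (τ e : k) • pathElem k (DiagVertex D) (D.gammaPlus e))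
            + (τ e : k) • (arrowGen k D (D.under e) * pathElem k (DiagVertex D) (D.gammaPlus e)) := by
        rw [mul_sub, mul_smul_comm, sub_add_cancel]
      rw [hsplit]
      exact add_mem (TwoSidedIdeal.mul_mem_left _ _ _ (hg e)) (aux_smul_mem _ _ hplus)
end

section
/- The algebra Λ_{D,τ} is finite dimensional over k. A k-basis of Λ_{D,τ} is given by the images of: the n trivial paths at the vertices, the paths following the segments of length ℓ for each 1 ≤ ℓ ≤ 2n − 1 (one such path starting at each arrow i ∈ ZMod (2n), namely the path of consecutive arrows i, i+1, …, i+ℓ−1), and the n positive fundamental cycles γ⁺_e for e ∈ Fin n. -/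
open Quiver

variable (k : Type) [CommRing k] (V : Type) [Quiver.{0} V] [Fintype V] [DecidableEq V]

open Quiver

variable {n : ℕ}

variable {n : ℕ}

namespace KP
set_option linter.unusedSectionVars false

open Finsupp

variable {n : ℕ} (k : Type) [Field k] [NeZero n] (D : GaussData n) (τ : Fin n → kˣ)

abbrev BIdx (n : ℕ) : Type := Fin n ⊕ (ZMod (2 * n) × Fin (2 * n - 1)) ⊕ Fin n

abbrev MMod (k : Type) [Field k] (n : ℕ) : Type := BIdx n →₀ k

lemma npos : 0 < n := Nat.pos_of_ne_zero (NeZero.ne n)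

lemma over_ne_under (e f : Fin n) : D.over' e ≠ D.under f := fun h => by
  have := D.bij.injective (a₁ := Sum.inl e) (a₂ := Sum.inr f) h
  simp at this

lemma over_or_under (i : ZMod (2 * n)) : D.over' (D.c i) = i ∨ D.under (D.c i) = i := by
  obtain ⟨s, hs⟩ := D.bij.surjective i
  rcases s with e | e
  · left; simp only [Sum.elim_inl] at hs; rw [← hs, D.c_over]
  · right; simp only [Sum.elim_inr] at hs; rw [← hs, D.c_under]

lemma len₁_bounds (e : Fin n) : 1 ≤ D.len₁ e ∧ D.len₁ e ≤ 2 * n - 1 := by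
  haveI : NeZero (2 * n) := ⟨by have := npos (n := n); omega⟩
  have hne : D.under e - D.over' e ≠ 0 :=
    sub_ne_zero_of_ne (Ne.symm (over_ne_under D e e))
  have h1 : (D.under e - D.over' e).val ≠ 0 := fun h => hne ((ZMod.val_eq_zero _).mp h)
  have h2 : (D.under e - D.over' e).val < 2 * n := ZMod.val_lt _
  rw [GaussData.len₁, if_neg h1]
  omega

lemma len₂_bounds (e : Fin n) : 1 ≤ D.len₂ e ∧ D.len₂ e ≤ 2 * n - 1 := by
  haveI : NeZero (2 * n) := ⟨by have := npos (n := n); omega⟩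
  have hne : D.over' e - D.under e ≠ 0 :=
    sub_ne_zero_of_ne (over_ne_under D e e)
  have h1 : (D.over' e - D.under e).val ≠ 0 := fun h => hne ((ZMod.val_eq_zero _).mp h)
  have h2 : (D.over' e - D.under e).val < 2 * n := ZMod.val_lt _
  rw [GaussData.len₂, if_neg h1]
  omega

lemma len_sum (e : Fin n) : D.len₁ e + D.len₂ e = 2 * n := by
  haveI : NeZero (2 * n) := ⟨by have := npos (n := n); omega⟩
  have hne : D.under e - D.over' e ≠ 0 :=
    sub_ne_zero_of_ne (Ne.symm (over_ne_under D e e))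
  have h1 : (D.under e - D.over' e).val ≠ 0 := fun h => hne ((ZMod.val_eq_zero _).mp h)
  have h2 : (D.under e - D.over' e).val < 2 * n := ZMod.val_lt _
  have h3 : D.over' e - D.under e = -(D.under e - D.over' e) := by ring
  have h4 : (D.over' e - D.under e).val = 2 * n - (D.under e - D.over' e).val := by
    rw [h3, ZMod.neg_val, if_neg hne]
  rw [GaussData.len₁, GaussData.len₂, if_neg h1, if_neg (by omega)]
  omega

/-- coefficient attached to the fundamental cycle based at point `i`. -/
def cycCoef (i : ZMod (2 * n)) : k := if D.over' (D.c i) = i then 1 else (τ (D.c i) : k)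

/-- the model element for the cycle based at `i`. -/
noncomputable def cyc (i : ZMod (2 * n)) : MMod k n :=
  cycCoef k D τ i • Finsupp.single (.inr (.inr (D.c i))) 1

/-- the model element for the segment path starting at `i` of length `L`:
a basis vector for `0 ≤ L ≤ 2n - 1`, a (scaled) cycle for `L = 2n`, zero beyond. -/
noncomputable def segM : ZMod (2 * n) → ℕ → MMod k n
  | i, 0 => Finsupp.single (.inl (D.c i)) 1
  | i, (L + 1) =>
    if h : L + 1 ≤ 2 * n - 1 then Finsupp.single (.inr (.inl (i, ⟨L, by omega⟩))) 1
    else if L + 1 = 2 * n then cyc k D τ i else 0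

lemma segM_zero (i : ZMod (2 * n)) : segM k D τ i 0 = Finsupp.single (.inl (D.c i)) 1 := rfl

lemma segM_mid (i : ZMod (2 * n)) (L : ℕ) (h1 : 1 ≤ L) (h2 : L ≤ 2 * n - 1) :
    segM k D τ i L = Finsupp.single (.inr (.inl (i, ⟨L - 1, by omega⟩))) 1 := by
  obtain ⟨L, rfl⟩ : ∃ L', L = L' + 1 := ⟨L - 1, by omega⟩
  rw [segM, dif_pos h2]
  norm_num

lemma segM_single_S (i : ZMod (2 * n)) (l : Fin (2 * n - 1)) :
    Finsupp.single (.inr (.inl (i, l)) : BIdx n) (1 : k) = segM k D τ i (l.1 + 1) := by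
  rw [segM_mid k D τ i _ (by omega) (by omega)]
  norm_num

lemma segM_top (i : ZMod (2 * n)) : segM k D τ i (2 * n) = cyc k D τ i := by
  have h : 2 * n = (2 * n - 1) + 1 := by have := npos (n := n); omega
  rw [h, segM, dif_neg (by omega), if_pos (by omega)]

lemma segM_gt (i : ZMod (2 * n)) (L : ℕ) (h : 2 * n < L) : segM k D τ i L = 0 := by
  obtain ⟨L, rfl⟩ : ∃ L', L = L' + 1 := ⟨L - 1, by omega⟩
  rw [segM, dif_neg (by omega), if_neg (by omega)]

lemma segM_single_G (e : Fin n) :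
    Finsupp.single (.inr (.inr e) : BIdx n) (1 : k) = segM k D τ (D.over' e) (2 * n) := by
  rw [segM_top, cyc, cycCoef, D.c_over, if_pos rfl, one_smul]

/-- source vertex of a basis element. -/
def srcB : BIdx n → Fin n
  | .inl v => v
  | .inr (.inl (i, _)) => D.c i
  | .inr (.inr e) => e

/-- target vertex of a basis element. -/
def tgtB : BIdx n → Fin n
  | .inl v => v
  | .inr (.inl (i, l)) => D.c (i + ((l.1 + 1 : ℕ) : ZMod (2 * n)))
  | .inr (.inr e) => e

/-- the multiplication table on basis elements (`mulB a b` is "`a` after `b`"). -/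
noncomputable def mulB : BIdx n → BIdx n → MMod k n
  | .inl v, .inl w => if v = w then Finsupp.single (.inl w) 1 else 0
  | .inl v, .inr (.inl (i, l)) =>
      if v = D.c (i + ((l.1 + 1 : ℕ) : ZMod (2 * n))) then
        Finsupp.single (.inr (.inl (i, l))) 1 else 0
  | .inl v, .inr (.inr e) => if v = e then Finsupp.single (.inr (.inr e)) 1 else 0
  | .inr (.inl (j, m)), .inl v =>
      if v = D.c j then Finsupp.single (.inr (.inl (j, m))) 1 else 0
  | .inr (.inr e), .inl v => if v = e then Finsupp.single (.inr (.inr e)) 1 else 0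
  | .inr (.inl (j, m)), .inr (.inl (i, l)) =>
      if j = i + ((l.1 + 1 : ℕ) : ZMod (2 * n)) then segM k D τ i (l.1 + m.1 + 2) else 0
  | .inr (.inl _), .inr (.inr _) => 0
  | .inr (.inr _), .inr (.inl _) => 0
  | .inr (.inr _), .inr (.inr _) => 0

/-- the model multiplication, as a bilinear map. -/
noncomputable def mulM : MMod k n →ₗ[k] MMod k n →ₗ[k] MMod k n :=
  Finsupp.linearCombination k (fun a => Finsupp.linearCombination k (fun b => mulB k D τ a b))

lemma mulM_single (a b : BIdx n) (c d : k) :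
    mulM k D τ (Finsupp.single a c) (Finsupp.single b d) = (c * d) • mulB k D τ a b := by
  simp [mulM, Finsupp.linearCombination_single, smul_smul]

lemma mulM_single_one (a b : BIdx n) :
    mulM k D τ (Finsupp.single a 1) (Finsupp.single b 1) = mulB k D τ a b := by
  simp [mulM_single]

end KP
namespace KP

set_option linter.unusedSectionVars false

open Finsupp

variable {n : ℕ} (k : Type) [Field k] [NeZero n] (D : GaussData n) (τ : Fin n → kˣ)

lemma endExt {f g : MMod k n →ₗ[k] MMod k n}
    (h : ∀ b : BIdx n, f (Finsupp.single b 1) = g (Finsupp.single b 1)) : f = g := by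
  refine Finsupp.lhom_ext' (fun b => ?_)
  apply LinearMap.ext_ring
  simpa only [LinearMap.coe_comp, Function.comp_apply, Finsupp.lsingle_apply] using h b

lemma Hsrc (b : BIdx n) (v : Fin n) :
    mulM k D τ (Finsupp.single b 1) (Finsupp.single (.inl v) 1) =
      if v = srcB D b then Finsupp.single b 1 else 0 := by
  rcases b with w | ⟨i, l⟩ | e <;> simp only [mulM_single_one, mulB, srcB]
  all_goals split_ifs <;> simp_all

lemma Htgt (b : BIdx n) (v : Fin n) :
    mulM k D τ (Finsupp.single (.inl v) 1) (Finsupp.single b 1) =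
      if v = tgtB D b then Finsupp.single b 1 else 0 := by
  rcases b with w | ⟨i, l⟩ | e <;> simp only [mulM_single_one, mulB, tgtB]
  all_goals split_ifs <;> simp_all

lemma H1r (L : ℕ) (i : ZMod (2 * n)) (v : Fin n) :
    mulM k D τ (segM k D τ i L) (Finsupp.single (.inl v) 1) =
      if v = D.c i then segM k D τ i L else 0 := by
  rcases L with _ | L
  · rw [segM_zero, Hsrc]; simp [srcB, segM_zero]; split_ifs <;> simp_all
  · by_cases h1 : L + 1 ≤ 2 * n - 1
    · rw [segM_mid k D τ i _ (by omega) h1, Hsrc]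
      simp [srcB, segM_mid k D τ i _ (by omega) h1]
    · by_cases h2 : L + 1 = 2 * n
      · rw [h2, segM_top, cyc, map_smul, LinearMap.smul_apply, Hsrc]
        simp only [srcB]
        split_ifs <;> simp_all
      · rw [segM_gt k D τ i _ (by omega)]
        simp

lemma H2l (L : ℕ) (i : ZMod (2 * n)) (v : Fin n) :
    mulM k D τ (Finsupp.single (.inl v) 1) (segM k D τ i L) =
      if v = D.c (i + (L : ℕ)) then segM k D τ i L else 0 := by
  haveI : NeZero (2 * n) := ⟨by have := npos (n := n); omega⟩
  rcases L with _ | L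
  · rw [segM_zero, Htgt]; simp [tgtB, segM_zero]; split_ifs <;> simp_all
  · by_cases h1 : L + 1 ≤ 2 * n - 1
    · rw [segM_mid k D τ i _ (by omega) h1, Htgt]
      simp only [tgtB]
      norm_num
    · by_cases h2 : L + 1 = 2 * n
      · rw [h2, segM_top, cyc, map_smul, Htgt]
        simp only [tgtB]
        rw [ZMod.natCast_self, add_zero]
        split_ifs <;> simp_all
      · rw [segM_gt k D τ i _ (by omega)]
        simp

lemma H_rG (L' : ℕ) (hL' : 1 ≤ L') (j : ZMod (2 * n)) (e : Fin n) :
    mulM k D τ (segM k D τ j L') (Finsupp.single (.inr (.inr e)) 1) = 0 := by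
  rcases L' with _ | L'
  · omega
  · by_cases h1 : L' + 1 ≤ 2 * n - 1
    · rw [segM_mid k D τ j _ (by omega) h1, mulM_single_one, mulB]
    · by_cases h2 : L' + 1 = 2 * n
      · rw [h2, segM_top, cyc, map_smul, LinearMap.smul_apply, mulM_single_one, mulB,
          smul_zero]
      · rw [segM_gt k D τ j _ (by omega)]
        simp

lemma H3 (L L' : ℕ) (hL : 1 ≤ L) (hL' : 1 ≤ L') (i j : ZMod (2 * n)) :
    mulM k D τ (segM k D τ j L') (segM k D τ i L) =
      if j = i + (L : ℕ) then segM k D τ i (L + L') else 0 := by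
  by_cases hLgt : 2 * n < L
  · rw [segM_gt k D τ i _ hLgt, map_zero, segM_gt k D τ i _ (by omega)]
    simp
  by_cases hL'gt : 2 * n < L'
  · rw [segM_gt k D τ j _ hL'gt, segM_gt k D τ i (L + L') (by omega)]
    simp
  by_cases hA : L ≤ 2 * n - 1
  · by_cases hB : L' ≤ 2 * n - 1
    · rw [segM_mid k D τ i L hL hA, segM_mid k D τ j L' hL' hB, mulM_single_one]
      simp only [mulB]
      have e1 : L - 1 + 1 = L := by omega
      have e2 : L - 1 + (L' - 1) + 2 = L + L' := by omega
      rw [e1, e2]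
    · have hB' : L' = 2 * n := by omega
      subst hB'
      rw [segM_top, cyc, map_smul, LinearMap.smul_apply,
        segM_mid k D τ i L hL hA, mulM_single_one]
      simp only [mulB, smul_zero]
      rw [segM_gt k D τ i _ (by omega)]
      simp
  · have hA' : L = 2 * n := by omega
    subst hA'
    rw [segM_top, cyc, map_smul, H_rG k D τ L' hL', smul_zero, segM_gt k D τ i _ (by omega)]
    simp

end KP
namespace KP

set_option linter.unusedSectionVars false

open Finsupp

variable {n : ℕ} (k : Type) [Field k] [NeZero n] (D : GaussData n) (τ : Fin n → kˣ)

lemma Hmismatch (L' : ℕ) (hL' : 1 ≤ L') (j : ZMod (2 * n)) (c : BIdx n)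
    (h : tgtB D c ≠ D.c j) :
    mulM k D τ (segM k D τ j L') (Finsupp.single c 1) = 0 := by
  rcases c with w | ⟨m, l⟩ | e
  · rw [H1r, if_neg (by simpa [tgtB] using h)]
  · rw [segM_single_S, H3 k D τ (l.1 + 1) L' (by omega) hL']
    rw [if_neg (fun hc => h (by rw [tgtB, ← hc]))]
  · rw [segM_single_G, H3 k D τ (2 * n) L' (by have := npos (n := n); omega) hL']
    rw [if_neg ?_]
    intro hc
    apply h
    rw [tgtB, ← D.c_over e]
    congr 1
    rw [hc, ZMod.natCast_self, add_zero]

lemma segAssoc (L L' : ℕ) (hL : 1 ≤ L) (hL' : 1 ≤ L') (i j : ZMod (2 * n)) :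
    mulM k D τ (segM k D τ j L') ∘ₗ mulM k D τ (segM k D τ i L) =
      mulM k D τ (mulM k D τ (segM k D τ j L') (segM k D τ i L)) := by
  rw [H3 k D τ L L' hL hL']
  by_cases hj : j = i + (L : ℕ)
  · rw [if_pos hj]
    have sub : ∀ (m : ZMod (2 * n)) (Lb : ℕ), 1 ≤ Lb →
        mulM k D τ (segM k D τ j L') (mulM k D τ (segM k D τ i L) (segM k D τ m Lb)) =
          mulM k D τ (segM k D τ i (L + L')) (segM k D τ m Lb) := by
      intro m Lb hLb
      rw [H3 k D τ Lb L hLb hL, H3 k D τ Lb (L + L') hLb (by omega)]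
      split_ifs with h
      · rw [H3 k D τ (Lb + L) L' (by omega) hL']
        rw [if_pos (by rw [hj, h]; push_cast; ring), ← add_assoc]
      · simp
    apply endExt
    intro c
    simp only [LinearMap.coe_comp, Function.comp_apply]
    rcases c with w | ⟨m, l⟩ | e
    · simp only [H1r]
      split_ifs with h
      · rw [H3 k D τ L L' hL hL', if_pos hj]
      · simp
    · rw [segM_single_S]; exact sub m _ (by omega)
    · rw [segM_single_G]; exact sub _ _ (by have := npos (n := n); omega)
  · rw [if_neg hj]
    have sub : ∀ (m : ZMod (2 * n)) (Lb : ℕ), 1 ≤ Lb →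
        mulM k D τ (segM k D τ j L') (mulM k D τ (segM k D τ i L) (segM k D τ m Lb)) = 0 := by
      intro m Lb hLb
      rw [H3 k D τ Lb L hLb hL]
      split_ifs with h
      · rw [H3 k D τ (Lb + L) L' (by omega) hL']
        rw [if_neg (fun hc => hj (by rw [hc, h]; push_cast; ring))]
      · simp
    apply endExt
    intro c
    simp only [LinearMap.coe_comp, Function.comp_apply, map_zero, LinearMap.zero_apply]
    rcases c with w | ⟨m, l⟩ | e
    · simp only [H1r]
      split_ifs with h
      · rw [H3 k D τ L L' hL hL', if_neg hj]
      · simp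
    · rw [segM_single_S]; exact sub m _ (by omega)
    · rw [segM_single_G]; exact sub _ _ (by have := npos (n := n); omega)

lemma MLV (v w : Fin n) :
    mulM k D τ (Finsupp.single (.inl v) 1) ∘ₗ mulM k D τ (Finsupp.single (.inl w) 1) =
      if v = w then mulM k D τ (Finsupp.single (.inl w) 1) else 0 := by
  by_cases hvw : v = w
  · subst hvw
    rw [if_pos rfl]
    apply endExt
    intro c
    simp only [LinearMap.coe_comp, Function.comp_apply]
    rw [Htgt]
    split_ifs with h
    · rw [Htgt, if_pos h]
    · simp
  · rw [if_neg hvw]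
    apply endExt
    intro c
    simp only [LinearMap.coe_comp, Function.comp_apply, LinearMap.zero_apply]
    rw [Htgt]
    split_ifs with h
    · rw [Htgt, if_neg (fun hc => hvw (hc.trans h.symm))]
    · simp

lemma ML1 (L : ℕ) (hL : 1 ≤ L) (i : ZMod (2 * n)) (v : Fin n) :
    mulM k D τ (Finsupp.single (.inl v) 1) ∘ₗ mulM k D τ (segM k D τ i L) =
      if v = D.c (i + (L : ℕ)) then mulM k D τ (segM k D τ i L) else 0 := by
  have key : ∀ (m : ZMod (2 * n)) (Lb : ℕ), 1 ≤ Lb →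
      mulM k D τ (Finsupp.single (.inl v) 1)
          (mulM k D τ (segM k D τ i L) (segM k D τ m Lb)) =
        if v = D.c (i + (L : ℕ)) then
          mulM k D τ (segM k D τ i L) (segM k D τ m Lb) else 0 := by
    intro m Lb hLb
    rw [H3 k D τ Lb L hLb hL]
    split_ifs with h hv hv
    · rw [H2l, if_pos ?_]
      · rw [hv, h]
        congr 1
        push_cast
        ring
    · rw [H2l, if_neg ?_]
      intro hc
      exact hv (by rw [hc, h]; congr 1; push_cast; ring)
    · simp
    · simp
  by_cases hv : v = D.c (i + (L : ℕ))
  · rw [if_pos hv]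
    apply endExt
    intro c
    simp only [LinearMap.coe_comp, Function.comp_apply]
    rcases c with w | ⟨m, l⟩ | e
    · simp only [H1r]
      split_ifs with h
      · rw [H2l, if_pos hv]
      · simp
    · rw [segM_single_S, key m _ (by omega), if_pos hv]
    · rw [segM_single_G, key _ _ (by have := npos (n := n); omega), if_pos hv]
  · rw [if_neg hv]
    apply endExt
    intro c
    simp only [LinearMap.coe_comp, Function.comp_apply, LinearMap.zero_apply]
    rcases c with w | ⟨m, l⟩ | e
    · simp only [H1r]
      split_ifs with h
      · rw [H2l, if_neg hv]
      · simp
    · rw [segM_single_S, key m _ (by omega), if_neg hv]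
    · rw [segM_single_G, key _ _ (by have := npos (n := n); omega), if_neg hv]

lemma ML2 (L' : ℕ) (hL' : 1 ≤ L') (j : ZMod (2 * n)) (v : Fin n) :
    mulM k D τ (segM k D τ j L') ∘ₗ mulM k D τ (Finsupp.single (.inl v) 1) =
      if v = D.c j then mulM k D τ (segM k D τ j L') else 0 := by
  by_cases hv : v = D.c j
  · rw [if_pos hv]
    apply endExt
    intro c
    simp only [LinearMap.coe_comp, Function.comp_apply]
    rw [Htgt]
    split_ifs with h
    · rfl
    · rw [Hmismatch k D τ L' hL' j c (fun hc => h (hv.trans hc.symm))]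
      simp
  · rw [if_neg hv]
    apply endExt
    intro c
    simp only [LinearMap.coe_comp, Function.comp_apply, LinearMap.zero_apply]
    rw [Htgt]
    split_ifs with h
    · exact Hmismatch k D τ L' hL' j c (fun hc => hv (h.trans hc))
    · simp

end KP
namespace KP

set_option linter.unusedSectionVars false

section PathLemmas

variable (k : Type) [CommRing k] (V : Type) [Quiver.{0} V] [Fintype V] [DecidableEq V]

lemma pathElem_cast {a b a' b' : V} (h1 : a = a') (h2 : b = b') (p : Quiver.Path a b) :
    pathElem k V (p.cast h1 h2) = pathElem k V p := by
  subst h1; subst h2; rw [Quiver.Path.cast_rfl_rfl]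

lemma pathElem_nil (a : V) :
    pathElem k V (Quiver.Path.nil : Quiver.Path a a) = vertexElem k V a := by
  rw [pathElem]

lemma pathElem_cons {a b c : V} (p : Quiver.Path a b) (f : b ⟶ c) :
    pathElem k V (Quiver.Path.cons p f) = arrowElem k V ⟨b, c, f⟩ * pathElem k V p := by
  rw [pathElem]

lemma vertexElem_mul (a b : V) :
    vertexElem k V a * vertexElem k V b = if a = b then vertexElem k V a else 0 := by
  have h := RingQuot.mkAlgHom_rel k (PathAlgRel.vertex (k := k) a b)
  simp only [map_mul, apply_ite (RingQuot.mkAlgHom k (PathAlgRel k V)), map_zero] at h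
  simpa [vertexElem] using h

lemma arrow_vertex (f : QuiverArrow V) (v : V) :
    arrowElem k V f * vertexElem k V v = if v = f.1 then arrowElem k V f else 0 := by
  have h := RingQuot.mkAlgHom_rel k (PathAlgRel.src (k := k) f v)
  simp only [map_mul, apply_ite (RingQuot.mkAlgHom k (PathAlgRel k V)), map_zero] at h
  simpa [vertexElem, arrowElem] using h

lemma vertex_arrow (f : QuiverArrow V) (v : V) :
    vertexElem k V v * arrowElem k V f = if v = f.2.1 then arrowElem k V f else 0 := by
  have h := RingQuot.mkAlgHom_rel k (PathAlgRel.tgt (k := k) f v)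
  simp only [map_mul, apply_ite (RingQuot.mkAlgHom k (PathAlgRel k V)), map_zero] at h
  simpa [vertexElem, arrowElem] using h

lemma sum_vertex : ∑ a : V, vertexElem k V a = 1 := by
  have h := RingQuot.mkAlgHom_rel k (PathAlgRel.unit (k := k) (V := V))
  simp only [map_sum, map_one] at h
  simpa [vertexElem] using h

lemma vertex_pathElem {a b : V} (p : Quiver.Path a b) :
    vertexElem k V b * pathElem k V p = pathElem k V p := by
  induction p with
  | nil => rw [pathElem, vertexElem_mul, if_pos rfl]
  | cons p f ih =>
      rw [pathElem_cons, ← mul_assoc, vertex_arrow, if_pos rfl]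

lemma pathElem_vertex {a b : V} (p : Quiver.Path a b) :
    pathElem k V p * vertexElem k V a = pathElem k V p := by
  induction p with
  | nil => rw [pathElem, vertexElem_mul, if_pos rfl]
  | cons p f ih => rw [pathElem_cons, mul_assoc, ih]

lemma vertex_pathElem_ite {a b : V} (v : V) (p : Quiver.Path a b) :
    vertexElem k V v * pathElem k V p = if v = b then pathElem k V p else 0 := by
  by_cases h : v = b
  · subst h; rw [if_pos rfl, vertex_pathElem]
  · rw [if_neg h]
    conv_lhs => rw [← vertex_pathElem k V p, ← mul_assoc]
    rw [vertexElem_mul, if_neg h, zero_mul]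

lemma pathElem_comp {a b c : V} (p : Quiver.Path a b) (q : Quiver.Path b c) :
    pathElem k V (p.comp q) = pathElem k V q * pathElem k V p := by
  induction q with
  | nil => rw [Quiver.Path.comp_nil, pathElem, vertex_pathElem]
  | cons q f ih =>
      rw [Quiver.Path.comp_cons, pathElem_cons, pathElem_cons, ih, mul_assoc]

end PathLemmas

section SegLemmas

variable {n : ℕ} (k : Type) [Field k] [NeZero n] (D : GaussData n) (τ : Fin n → kˣ)

lemma pathElem_segPath_zero (i : ZMod (2 * n)) :
    pathElem k (DiagVertex D) (D.segPath i 0) = vertexElem k (DiagVertex D) ⟨D.c i⟩ := by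
  conv_lhs => rw [GaussData.segPath]
  rw [pathElem_cast, pathElem_nil]

lemma pathElem_segPath_succ (i : ZMod (2 * n)) (L : ℕ) :
    pathElem k (DiagVertex D) (D.segPath i (L + 1)) =
      arrowGen k D (i + (L : ℕ)) * pathElem k (DiagVertex D) (D.segPath i L) := by
  conv_lhs => rw [GaussData.segPath]
  rw [pathElem_cast, pathElem_cons]
  rfl

lemma pathElem_segPath_add (i : ZMod (2 * n)) (L L' : ℕ) :
    pathElem k (DiagVertex D) (D.segPath (i + (L : ℕ)) L') *
        pathElem k (DiagVertex D) (D.segPath i L) =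
      pathElem k (DiagVertex D) (D.segPath i (L + L')) := by
  induction L' with
  | zero =>
      rw [pathElem_segPath_zero, vertex_pathElem_ite, if_pos rfl]
      rfl
  | succ L' ih =>
      have e1 : (i + (L : ℕ)) + (L' : ℕ) = i + ((L + L' : ℕ) : ZMod (2 * n)) := by
        push_cast; ring
      have e2 : L + (L' + 1) = (L + L') + 1 := by ring
      rw [pathElem_segPath_succ, mul_assoc, ih, e1, e2, pathElem_segPath_succ]

lemma pathElem_alpha (e : Fin n) :
    pathElem k (DiagVertex D) (D.alphaPath e) =
      pathElem k (DiagVertex D) (D.segPath (D.over' e) (D.len₁ e)) := by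
  rw [GaussData.alphaPath, pathElem_cast]

lemma pathElem_beta (e : Fin n) :
    pathElem k (DiagVertex D) (D.betaPath e) =
      pathElem k (DiagVertex D) (D.segPath (D.under e) (D.len₂ e)) := by
  rw [GaussData.betaPath, pathElem_cast]

lemma pathElem_gammaPlus (e : Fin n) :
    pathElem k (DiagVertex D) (D.gammaPlus e) =
      pathElem k (DiagVertex D) (D.segPath (D.over' e) (2 * n)) := by
  have hu : D.under e = D.over' e + ((D.len₁ e : ℕ) : ZMod (2 * n)) := by
    rw [D.coe_len₁]; ring
  rw [GaussData.gammaPlus, pathElem_comp, pathElem_beta, pathElem_alpha, hu,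
    pathElem_segPath_add, len_sum]

lemma pathElem_gammaMinus (e : Fin n) :
    pathElem k (DiagVertex D) (D.gammaMinus e) =
      pathElem k (DiagVertex D) (D.segPath (D.under e) (2 * n)) := by
  have hu : D.over' e = D.under e + ((D.len₂ e : ℕ) : ZMod (2 * n)) := by
    rw [D.coe_len₂]; ring
  have hs : D.len₂ e + D.len₁ e = 2 * n := by
    have := len_sum D e; omega
  rw [GaussData.gammaMinus, pathElem_comp, pathElem_beta, pathElem_alpha, hu,
    pathElem_segPath_add, hs]

end SegLemmas

end KP
namespace KP

set_option linter.unusedSectionVars false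

open Finsupp

variable {n : ℕ} (k : Type) [Field k] [NeZero n] (D : GaussData n) (τ : Fin n → kˣ)

/-- index `0` in `Fin (2n-1)`. -/
def fin0 {n : ℕ} [NeZero n] : Fin (2 * n - 1) := ⟨0, by have := npos (n := n); omega⟩

/-- images of generators in the model endomorphism algebra. -/
noncomputable def genMap : (DiagVertex D ⊕ QuiverArrow (DiagVertex D)) → Module.End k (MMod k n)
  | .inl a => mulM k D τ (Finsupp.single (.inl a.val) 1)
  | .inr f => mulM k D τ (Finsupp.single (.inr (.inl (f.2.2.1, fin0))) 1)

lemma arrSeg (i : ZMod (2 * n)) :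
    Finsupp.single (.inr (.inl (i, fin0)) : BIdx n) (1 : k) = segM k D τ i 1 :=
  segM_single_S k D τ i fin0

noncomputable def rhoF :
    FreeAlgebra k (DiagVertex D ⊕ QuiverArrow (DiagVertex D)) →ₐ[k] Module.End k (MMod k n) :=
  FreeAlgebra.lift k (genMap k D τ)

lemma rhoF_ι (x) : rhoF k D τ (FreeAlgebra.ι k x) = genMap k D τ x :=
  FreeAlgebra.lift_ι_apply _ _

lemma rhoF_rel : ∀ ⦃x y⦄, PathAlgRel k (DiagVertex D) x y → rhoF k D τ x = rhoF k D τ y := by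
  intro x y h
  induction h with
  | vertex a b =>
      rw [map_mul, rhoF_ι, rhoF_ι, apply_ite (rhoF k D τ), map_zero, rhoF_ι]
      show genMap k D τ (Sum.inl a) * genMap k D τ (Sum.inl b) = _
      simp only [genMap]
      rw [Module.End.mul_eq_comp, MLV]
      by_cases hab : a = b
      · rw [if_pos (by rw [hab]), if_pos hab, hab]
      · rw [if_neg (fun h => hab (DiagVertex.ext h)), if_neg hab]
  | unit =>
      rw [map_sum, map_one]
      simp only [rhoF_ι, genMap]
      apply endExt
      intro c
      rw [LinearMap.sum_apply, Module.End.one_apply]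
      have key : ∀ a : DiagVertex D,
          (mulM k D τ (Finsupp.single (.inl a.val) 1)) (Finsupp.single c 1) =
            if a = ⟨tgtB D c⟩ then Finsupp.single c 1 else 0 := by
        intro a
        rw [Htgt]
        split_ifs with h1 h2 h2
        · rfl
        · exact absurd (DiagVertex.ext h1) h2
        · exact absurd (by rw [h2]) h1
        · rfl
      simp only [key]
      rw [Finset.sum_ite_eq' Finset.univ (⟨tgtB D c⟩ : DiagVertex D)
        (fun _ => Finsupp.single c 1), if_pos (Finset.mem_univ _)]
  | src f v =>
      obtain ⟨a, b, i, h1, h2⟩ := f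
      rw [map_mul, rhoF_ι, rhoF_ι, apply_ite (rhoF k D τ), map_zero, rhoF_ι]
      show genMap k D τ (Sum.inr ⟨a, b, ⟨i, h1, h2⟩⟩) * genMap k D τ (Sum.inl v) = _
      simp only [genMap]
      rw [arrSeg, Module.End.mul_eq_comp, ML2 k D τ 1 le_rfl i v.val]
      by_cases hv : v = a
      · rw [if_pos (by rw [hv, ← h1]), if_pos hv]
      · rw [if_neg (fun h => hv (DiagVertex.ext (h.trans h1))), if_neg hv]
  | tgt f v =>
      obtain ⟨a, b, i, h1, h2⟩ := f
      rw [map_mul, rhoF_ι, rhoF_ι, apply_ite (rhoF k D τ), map_zero, rhoF_ι]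
      show genMap k D τ (Sum.inl v) * genMap k D τ (Sum.inr ⟨a, b, ⟨i, h1, h2⟩⟩) = _
      simp only [genMap]
      rw [arrSeg, Module.End.mul_eq_comp, ML1 k D τ 1 le_rfl i v.val]
      have hcast : D.c (i + ((1 : ℕ) : ZMod (2 * n))) = b.val := by
        rw [Nat.cast_one]; exact h2
      by_cases hv : v = b
      · rw [if_pos (by rw [hv, hcast]), if_pos hv]
      · rw [if_neg (fun h => hv (DiagVertex.ext (h.trans hcast))), if_neg hv]

noncomputable def rhoP : PathAlg k (DiagVertex D) →ₐ[k] Module.End k (MMod k n) :=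
  RingQuot.liftAlgHom k ⟨rhoF k D τ, rhoF_rel k D τ⟩

lemma rhoP_mk (x) :
    rhoP k D τ (RingQuot.mkAlgHom k (PathAlgRel k (DiagVertex D)) x) = rhoF k D τ x :=
  RingQuot.liftAlgHom_mkAlgHom_apply _ _ _ _

lemma rhoP_vertexElem (a : DiagVertex D) :
    rhoP k D τ (vertexElem k (DiagVertex D) a) = mulM k D τ (Finsupp.single (.inl a.val) 1) := by
  rw [vertexElem, rhoP_mk, rhoF_ι]
  simp only [genMap]

lemma rhoP_arrowGen (i : ZMod (2 * n)) :
    rhoP k D τ (arrowGen k D i) = mulM k D τ (segM k D τ i 1) := by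
  rw [arrowGen, arrowElem, rhoP_mk, rhoF_ι]
  show genMap k D τ (Sum.inr ⟨⟨D.c i⟩, ⟨D.c (i + 1)⟩, ⟨i, rfl, rfl⟩⟩) = _
  simp only [genMap]
  rw [arrSeg]

lemma rhoP_segPath (i : ZMod (2 * n)) (L : ℕ) :
    rhoP k D τ (pathElem k (DiagVertex D) (D.segPath i L)) = mulM k D τ (segM k D τ i L) := by
  induction L with
  | zero => rw [pathElem_segPath_zero, rhoP_vertexElem, segM_zero]
  | succ L ih =>
      rw [pathElem_segPath_succ, map_mul, rhoP_arrowGen, ih, Module.End.mul_eq_comp]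
      rcases L with _ | L
      · have h0 : i + ((0 : ℕ) : ZMod (2 * n)) = i := by push_cast; ring
        rw [h0, segM_zero, ML2 k D τ 1 le_rfl i (D.c i), if_pos rfl]
      · rw [segAssoc k D τ (L + 1) 1 (by omega) le_rfl,
          H3 k D τ (L + 1) 1 (by omega) le_rfl, if_pos rfl]

lemma rhoP_gammaPlus (e : Fin n) :
    rhoP k D τ (pathElem k (DiagVertex D) (D.gammaPlus e)) =
      mulM k D τ (segM k D τ (D.over' e) (2 * n)) := by
  rw [pathElem_gammaPlus, rhoP_segPath]

lemma rhoP_gammaMinus (e : Fin n) :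
    rhoP k D τ (pathElem k (DiagVertex D) (D.gammaMinus e)) =
      mulM k D τ (segM k D τ (D.under e) (2 * n)) := by
  rw [pathElem_gammaMinus, rhoP_segPath]

lemma cyc_under (e : Fin n) :
    cyc k D τ (D.under e) = (τ e : k) • Finsupp.single (.inr (.inr e)) 1 := by
  rw [cyc, cycCoef, D.c_under, if_neg (over_ne_under D e e)]

lemma cyc_over (e : Fin n) :
    cyc k D τ (D.over' e) = Finsupp.single (.inr (.inr e)) 1 := by
  rw [cyc, cycCoef, D.c_over, if_pos rfl, one_smul]

lemma rhoK_rel : ∀ ⦃x y⦄, KnotRel k D τ x y → rhoP k D τ x = rhoP k D τ y := by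
  intro x y h
  induction h with
  | typeI i j hc hne =>
      rw [map_mul, map_zero, rhoP_arrowGen, rhoP_arrowGen, Module.End.mul_eq_comp,
        segAssoc k D τ 1 1 le_rfl le_rfl, H3 k D τ 1 1 le_rfl le_rfl,
        if_neg (by rw [Nat.cast_one]; exact hne), map_zero]
  | typeII e =>
      rw [map_smul, rhoP_gammaMinus, rhoP_gammaPlus, segM_top, segM_top, cyc_under, cyc_over,
        map_smul]

noncomputable def rhoK : KnotAlg k D τ →ₐ[k] Module.End k (MMod k n) :=
  RingQuot.liftAlgHom k ⟨rhoP k D τ, rhoK_rel k D τ⟩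

lemma rhoK_mk (x) :
    rhoK k D τ (RingQuot.mkAlgHom k (KnotRel k D τ) x) = rhoP k D τ x :=
  RingQuot.liftAlgHom_mkAlgHom_apply _ _ _ _

/-- sum of the vertex basis vectors. -/
noncomputable def unitVec : MMod k n := ∑ v : Fin n, Finsupp.single (.inl v) 1

lemma mulM_segM_unit (i : ZMod (2 * n)) (L : ℕ) :
    mulM k D τ (segM k D τ i L) (unitVec k) = segM k D τ i L := by
  rw [unitVec, map_sum]
  simp only [H1r]
  rw [Finset.sum_ite_eq' Finset.univ (D.c i) (fun _ => segM k D τ i L),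
    if_pos (Finset.mem_univ _)]

lemma mulM_vertex_unit (v : Fin n) :
    mulM k D τ (Finsupp.single (.inl v) 1) (unitVec k) = Finsupp.single (.inl v) 1 := by
  rw [unitVec, map_sum]
  have key : ∀ w : Fin n,
      mulM k D τ (Finsupp.single (.inl v) 1) (Finsupp.single (.inl w) (1 : k)) =
        if v = w then Finsupp.single (.inl w) (1 : k) else 0 := by
    intro w; rw [Htgt]; rfl
  simp only [key]
  simp

noncomputable def Psi : KnotAlg k D τ →ₗ[k] MMod k n where
  toFun := fun x => rhoK k D τ x (unitVec k)
  map_add' := fun x y => by simp only [map_add, LinearMap.add_apply]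
  map_smul' := fun c x => by simp only [map_smul, LinearMap.smul_apply, RingHom.id_apply]

lemma Psi_family (b : BIdx n) :
    Psi k D τ (knotBasisFamily k D τ b) = Finsupp.single b 1 := by
  have hPsi : ∀ x, Psi k D τ x = rhoK k D τ x (unitVec k) := fun _ => rfl
  rcases b with e | ⟨i, l⟩ | e
  · rw [hPsi, knotBasisFamily, rhoK_mk, rhoP_vertexElem]
    exact mulM_vertex_unit k D τ e
  · rw [hPsi, knotBasisFamily, rhoK_mk, rhoP_segPath, mulM_segM_unit, segM_single_S]
  · rw [hPsi, knotBasisFamily, rhoK_mk, rhoP_gammaPlus, mulM_segM_unit, segM_single_G]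

lemma indep1 : LinearIndependent k (fun b : BIdx n => Finsupp.single b (1 : k)) := by
  rw [← Finsupp.coe_basisSingleOne]
  exact Module.Basis.linearIndependent _

lemma comp_eq : (⇑(Psi k D τ) ∘ knotBasisFamily k D τ) =
    fun b : BIdx n => Finsupp.single b (1 : k) := by
  funext b
  exact Psi_family k D τ b

set_option maxHeartbeats 1000000 in
lemma indep : LinearIndependent k (knotBasisFamily k D τ) := by
  have h2 := indep1 (n := n) k
  rw [← comp_eq k D τ] at h2
  rw [linearIndependent_iff] at h2
  refine (linearIndependent_iff (R := k) (v := knotBasisFamily k D τ)).mpr ?_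
  intro l hl
  refine h2 l ?_
  have key : Finsupp.linearCombination k (⇑(Psi k D τ) ∘ knotBasisFamily k D τ) l =
      Psi k D τ (Finsupp.linearCombination k (knotBasisFamily k D τ) l) := by
    rw [Finsupp.linearCombination_apply, Finsupp.linearCombination_apply, map_finsuppSum]
    simp only [Function.comp_apply, map_smul]
  rw [key, hl, map_zero]

end KP
namespace KP

set_option linter.unusedSectionVars false

open Finsupp

variable {n : ℕ} (k : Type) [Field k] [NeZero n] (D : GaussData n) (τ : Fin n → kˣ)

/-- abbreviation for the quotient map onto the knot algebra. -/
noncomputable def mkh : PathAlg k (DiagVertex D) →ₐ[k] KnotAlg k D τ :=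
  RingQuot.mkAlgHom k (KnotRel k D τ)

/-- the span of the claimed basis. -/
noncomputable def WSpan : Submodule k (KnotAlg k D τ) :=
  Submodule.span k (Set.range (knotBasisFamily k D τ))

lemma famV (e : Fin n) :
    knotBasisFamily k D τ (.inl e) = mkh k D τ (vertexElem k (DiagVertex D) ⟨e⟩) := rfl

lemma famS (i : ZMod (2 * n)) (l : Fin (2 * n - 1)) :
    knotBasisFamily k D τ (.inr (.inl (i, l))) =
      mkh k D τ (pathElem k (DiagVertex D) (D.segPath i (l.1 + 1))) := rfl

lemma famG (e : Fin n) :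
    knotBasisFamily k D τ (.inr (.inr e)) =
      mkh k D τ (pathElem k (DiagVertex D) (D.gammaPlus e)) := rfl

lemma kII (e : Fin n) :
    mkh k D τ (pathElem k (DiagVertex D) (D.gammaMinus e)) =
      (τ e : k) • mkh k D τ (pathElem k (DiagVertex D) (D.gammaPlus e)) := by
  have h := RingQuot.mkAlgHom_rel k (KnotRel.typeII (k := k) (D := D) (τ := τ) e)
  rw [map_smul] at h
  exact h

lemma kI (i j : ZMod (2 * n)) (hne : j ≠ i + 1) :
    mkh k D τ (arrowGen k D j) * mkh k D τ (arrowGen k D i) = 0 := by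
  by_cases hc : D.c (i + 1) = D.c j
  · have h := RingQuot.mkAlgHom_rel k (KnotRel.typeI (k := k) (D := D) (τ := τ) i j hc hne)
    rw [map_mul, map_zero] at h
    exact h
  · have h1 : arrowGen k D j * vertexElem k (DiagVertex D) ⟨D.c j⟩ = arrowGen k D j := by
      rw [arrowGen, arrow_vertex, if_pos rfl]
    have h2 : vertexElem k (DiagVertex D) ⟨D.c (i + 1)⟩ * arrowGen k D i = arrowGen k D i := by
      rw [arrowGen, vertex_arrow, if_pos rfl]
    have h0 : arrowGen k D j * arrowGen k D i = 0 := by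
      conv_lhs => rw [← h1, ← h2]
      rw [mul_assoc, ← mul_assoc (vertexElem k (DiagVertex D) ⟨D.c j⟩), vertexElem_mul,
        if_neg (fun h => hc (congrArg DiagVertex.val h).symm), zero_mul, mul_zero]
    rw [← map_mul, h0, map_zero]

lemma kArrSeg0 (i' j : ZMod (2 * n)) (L : ℕ) (hL : 1 ≤ L) (h : i' ≠ j + (L : ℕ)) :
    mkh k D τ (arrowGen k D i') *
      mkh k D τ (pathElem k (DiagVertex D) (D.segPath j L)) = 0 := by
  obtain ⟨L', rfl⟩ : ∃ L'', L = L'' + 1 := ⟨L - 1, by omega⟩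
  rw [pathElem_segPath_succ, map_mul, ← mul_assoc,
    kI k D τ (j + (L' : ℕ)) i' (by intro hc; apply h; rw [hc]; push_cast; ring), zero_mul]

lemma mem_seg (i : ZMod (2 * n)) (L : ℕ) (h1 : 1 ≤ L) (h2 : L ≤ 2 * n - 1) :
    mkh k D τ (pathElem k (DiagVertex D) (D.segPath i L)) ∈ WSpan k D τ := by
  have hL : L - 1 + 1 = L := by omega
  rw [← hL]
  exact Submodule.subset_span ⟨.inr (.inl (i, ⟨L - 1, by omega⟩)), rfl⟩

lemma mem_seg2n (j : ZMod (2 * n)) :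
    mkh k D τ (pathElem k (DiagVertex D) (D.segPath j (2 * n))) ∈ WSpan k D τ := by
  rcases over_or_under D j with h | h
  · refine Submodule.subset_span ⟨.inr (.inr (D.c j)), ?_⟩
    rw [famG, pathElem_gammaPlus, h]
  · have h1 : pathElem k (DiagVertex D) (D.segPath j (2 * n)) =
        pathElem k (DiagVertex D) (D.gammaMinus (D.c j)) := by
      rw [pathElem_gammaMinus, h]
    rw [h1, kII]
    exact Submodule.smul_mem _ _ (Submodule.subset_span ⟨.inr (.inr (D.c j)), rfl⟩)

lemma TmulFam (v : DiagVertex D) (b : BIdx n) :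
    mkh k D τ (vertexElem k (DiagVertex D) v) * knotBasisFamily k D τ b ∈ WSpan k D τ := by
  rcases b with e | ⟨i, l⟩ | e
  · rw [famV, ← map_mul, vertexElem_mul, apply_ite (mkh k D τ), map_zero]
    split_ifs with h
    · exact Submodule.subset_span ⟨.inl e, by rw [famV, h]⟩
    · exact Submodule.zero_mem _
  · rw [famS, ← map_mul, vertex_pathElem_ite, apply_ite (mkh k D τ), map_zero]
    split_ifs with h
    · exact mem_seg k D τ i _ (by omega) (by omega)
    · exact Submodule.zero_mem _
  · rw [famG, ← map_mul, vertex_pathElem_ite, apply_ite (mkh k D τ), map_zero]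
    split_ifs with h
    · exact Submodule.subset_span ⟨.inr (.inr e), rfl⟩
    · exact Submodule.zero_mem _

lemma mkh_arrowGen_mem (i : ZMod (2 * n)) :
    mkh k D τ (arrowGen k D i) ∈ WSpan k D τ := by
  have h0 : i + ((0 : ℕ) : ZMod (2 * n)) = i := by push_cast; ring
  have h1 : mkh k D τ (pathElem k (DiagVertex D) (D.segPath i 1)) =
      mkh k D τ (arrowGen k D i) := by
    rw [pathElem_segPath_succ, pathElem_segPath_zero, h0]
    rw [show arrowGen k D i * vertexElem k (DiagVertex D) ⟨D.c i⟩ = arrowGen k D i from by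
      rw [arrowGen, arrow_vertex, if_pos rfl]]
  rw [← h1]
  exact mem_seg k D τ i 1 le_rfl (by have := npos (n := n); omega)

lemma AmulFam (i : ZMod (2 * n)) (b : BIdx n) :
    mkh k D τ (arrowGen k D i) * knotBasisFamily k D τ b ∈ WSpan k D τ := by
  haveI : NeZero (2 * n) := ⟨by have := npos (n := n); omega⟩
  rcases b with e | ⟨j, l⟩ | e
  · rw [famV, ← map_mul, arrowGen, arrow_vertex, apply_ite (mkh k D τ), map_zero]
    split_ifs with h
    · exact mkh_arrowGen_mem k D τ i
    · exact Submodule.zero_mem _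
  · rw [famS]
    by_cases hij : i = j + ((l.1 + 1 : ℕ) : ZMod (2 * n))
    · have hstep : mkh k D τ (arrowGen k D i) *
          mkh k D τ (pathElem k (DiagVertex D) (D.segPath j (l.1 + 1))) =
            mkh k D τ (pathElem k (DiagVertex D) (D.segPath j (l.1 + 1 + 1))) := by
        conv_rhs => rw [pathElem_segPath_succ]
        rw [map_mul, hij]
      rw [hstep]
      by_cases hsz : l.1 + 1 + 1 ≤ 2 * n - 1
      · exact mem_seg k D τ j _ (by omega) hsz
      · have h2n : l.1 + 1 + 1 = 2 * n := by have := l.2; omega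
        rw [h2n]
        exact mem_seg2n k D τ j
    · rw [kArrSeg0 k D τ i j (l.1 + 1) (by omega) hij]
      exact Submodule.zero_mem _
  · rw [famG, pathElem_gammaPlus]
    by_cases hio : i = D.over' e
    · have hover : mkh k D τ (pathElem k (DiagVertex D) (D.segPath (D.over' e) (2 * n))) =
          (((τ e)⁻¹ : kˣ) : k) • mkh k D τ
            (pathElem k (DiagVertex D) (D.segPath (D.under e) (2 * n))) := by
        rw [← pathElem_gammaPlus, ← pathElem_gammaMinus, kII, smul_smul, Units.inv_mul,
          one_smul]
      rw [hover, mul_smul_comm,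
        kArrSeg0 k D τ i (D.under e) (2 * n) (by have := npos (n := n); omega)
          (by rw [ZMod.natCast_self, add_zero, hio]; exact over_ne_under D e e),
        smul_zero]
      exact Submodule.zero_mem _
    · rw [kArrSeg0 k D τ i (D.over' e) (2 * n) (by have := npos (n := n); omega)
        (by rw [ZMod.natCast_self, add_zero]; exact hio)]
      exact Submodule.zero_mem _

lemma oneMem : (1 : KnotAlg k D τ) ∈ WSpan k D τ := by
  have h1 : (1 : KnotAlg k D τ) = ∑ a : DiagVertex D, mkh k D τ (vertexElem k _ a) := by
    rw [← map_sum, sum_vertex, map_one]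
  rw [h1]
  exact Submodule.sum_mem _ (fun a _ => Submodule.subset_span ⟨.inl a.val, rfl⟩)

end KP
namespace KP

set_option linter.unusedSectionVars false

variable {n : ℕ} (k : Type) [Field k] [NeZero n] (D : GaussData n) (τ : Fin n → kˣ)

noncomputable def mkFree :
    FreeAlgebra k (DiagVertex D ⊕ QuiverArrow (DiagVertex D)) →ₐ[k] KnotAlg k D τ :=
  (mkh k D τ).comp (RingQuot.mkAlgHom k (PathAlgRel k (DiagVertex D)))

lemma mkFree_surj : Function.Surjective ⇑(mkFree k D τ) := by
  have h1 := RingQuot.mkAlgHom_surjective k (KnotRel k D τ)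
  have h2 := RingQuot.mkAlgHom_surjective k (PathAlgRel k (DiagVertex D))
  rw [mkFree]
  rw [AlgHom.coe_comp]
  exact Function.Surjective.comp h1 h2

lemma arrowElem_eq (f : QuiverArrow (DiagVertex D)) :
    ∃ i, arrowElem k (DiagVertex D) f = arrowGen k D i := by
  obtain ⟨a, b, g⟩ := f
  obtain ⟨i, h1, h2⟩ := g
  obtain ⟨av⟩ := a
  obtain ⟨bv⟩ := b
  refine ⟨i, ?_⟩
  have h1' : D.c i = av := h1
  have h2' : D.c (i + 1) = bv := h2
  subst h1'
  subst h2'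
  rfl

lemma genMem (x : DiagVertex D ⊕ QuiverArrow (DiagVertex D)) :
    ∀ w ∈ WSpan k D τ, mkFree k D τ (FreeAlgebra.ι k x) * w ∈ WSpan k D τ := by
  have hx : ∀ g : KnotAlg k D τ,
      (∀ b : BIdx n, g * knotBasisFamily k D τ b ∈ WSpan k D τ) →
        ∀ w ∈ WSpan k D τ, g * w ∈ WSpan k D τ := by
    intro g hg w hw
    refine Submodule.span_induction ?_ ?_ ?_ ?_ hw
    · rintro _ ⟨b, rfl⟩; exact hg b
    · rw [mul_zero]; exact Submodule.zero_mem _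
    · intro a b _ _ ha2 hb2; rw [mul_add]; exact Submodule.add_mem _ ha2 hb2
    · intro c a _ ha2; rw [mul_smul_comm]; exact Submodule.smul_mem _ _ ha2
  rcases x with a | f
  · have heq : mkFree k D τ (FreeAlgebra.ι k (Sum.inl a)) =
        mkh k D τ (vertexElem k (DiagVertex D) a) := rfl
    rw [heq]
    exact hx _ (fun b => TmulFam k D τ a b)
  · obtain ⟨i, hi⟩ := arrowElem_eq k D f
    have heq : mkFree k D τ (FreeAlgebra.ι k (Sum.inr f)) =
        mkh k D τ (arrowGen k D i) := by
      rw [show mkFree k D τ (FreeAlgebra.ι k (Sum.inr f)) =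
        mkh k D τ (arrowElem k (DiagVertex D) f) from rfl, hi]
    rw [heq]
    exact hx _ (fun b => AmulFam k D τ i b)

lemma span_top : Submodule.span k (Set.range (knotBasisFamily k D τ)) = ⊤ := by
  have hS : ∀ y : KnotAlg k D τ, ∀ w ∈ WSpan k D τ, y * w ∈ WSpan k D τ := by
    intro y
    let S : Subalgebra k (KnotAlg k D τ) :=
      { carrier := {y | ∀ w ∈ WSpan k D τ, y * w ∈ WSpan k D τ}
        mul_mem' := fun {a b} ha hb w hw => by rw [mul_assoc]; exact ha _ (hb _ hw)
        one_mem' := fun w hw => by rwa [one_mul]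
        add_mem' := fun {a b} ha hb w hw => by
          rw [add_mul]; exact Submodule.add_mem _ (ha _ hw) (hb _ hw)
        zero_mem' := fun w hw => by rw [zero_mul]; exact Submodule.zero_mem _
        algebraMap_mem' := fun r w hw => by
          rw [← Algebra.smul_def]; exact Submodule.smul_mem _ _ hw }
    have h1 : Algebra.adjoin k (⇑(mkFree k D τ) '' Set.range (FreeAlgebra.ι k)) = ⊤ := by
      rw [← AlgHom.map_adjoin, FreeAlgebra.adjoin_range_ι, Algebra.map_top,
        (AlgHom.range_eq_top _).mpr (mkFree_surj k D τ)]
    have hle : (⊤ : Subalgebra k (KnotAlg k D τ)) ≤ S := by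
      rw [← h1]
      refine Algebra.adjoin_le ?_
      rintro _ ⟨_, ⟨x, rfl⟩, rfl⟩
      exact genMem k D τ x
    exact hle trivial
  rw [eq_top_iff]
  rintro y -
  have hy := hS y 1 (oneMem k D τ)
  rw [mul_one, WSpan] at hy
  exact hy

lemma findim : FiniteDimensional k (KnotAlg k D τ) := by
  haveI : NeZero (2 * n) := ⟨by have := npos (n := n); omega⟩
  have hfin : (Set.range (knotBasisFamily k D τ)).Finite := Set.finite_range _
  exact ⟨⟨hfin.toFinset, by rw [Set.Finite.coe_toFinset]; exact span_top k D τ⟩⟩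

end KP

theorem stmt4 (k : Type) [Field k] [NeZero n] (D : GaussData n) (τ : Fin n → kˣ) :
    FiniteDimensional k (KnotAlg k D τ) ∧
      LinearIndependent k (knotBasisFamily k D τ) ∧
      Submodule.span k (Set.range (knotBasisFamily k D τ)) = ⊤ := by
  exact ⟨KP.findim k D τ, KP.indep k D τ, KP.span_top k D τ⟩
end
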